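/- Additionally, let d_j be a natural number with d_j ≤ min(j, T), and let Ḡ_j, Ĝ_j, N₁, N₂, N₃ ∈ ℝ^{m×n} satisfy: Ĝ_j = N₁ + N₂ + N₃; |⟨N₁, ∇f(K_j)⟩| ≤ (1/8) ‖∇f(K_j)‖_F · max_{0 ≤ v ≤ d_j} ‖∇f(K_{j−v})‖_F; |⟨N₂, ∇f(K_j)⟩| ≤ 2 ‖∇f(K_j)‖_F · max_{0 ≤ v ≤ d_j} ‖∇f(K_{j−v}) − ∇f(K_j)‖_F; ⟨N₃, ∇f(K_j)⟩ ≥ (1/2) ‖∇f(K_j)‖_F²; ‖Ĝ_j‖_F ≤ C_g · max_{0 ≤ v ≤ d_j} ‖∇f(K_{j−v})‖_F; and ‖Ḡ_j − Ĝ_j‖_F ≤ min(1/8, C_g) · √(2 μ₁ ε). Then: (a) ⟨∇f(K_j), Ḡ_j⟩ ≥ (1/16) ‖∇f(K_j)‖_F² > 0, and (b) ‖Ḡ_j‖_F ≤ 4 C_g ‖∇f(K_j)‖_F. -/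
import Mathlib


open RealInnerProductSpace

set_option maxHeartbeats 2000000 in
theorem stmt10 (m n : ℕ) (hm : 0 < m) (hn : 0 < n)
    (T : ℕ) (hT : 1 ≤ T)
    (μ₁ μ₂ Cg ε η fstar : ℝ)
    (hμ₁ : 0 < μ₁) (hμ₂ : 0 < μ₂) (hCg : 0 < Cg) (hε : 0 < ε) (hη : 0 < η)
    (hηle : η ≤ 1 / (128 * μ₂ * (Cg ^ 2 + T * Cg)))
    (f : EuclideanSpace ℝ (Fin m × Fin n) → ℝ) (hf : Differentiable ℝ f)
    (j : ℕ) (hj : 1 ≤ j)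
    (K Gbar Ghat : ℕ → EuclideanSpace ℝ (Fin m × Fin n)) (d : ℕ → ℕ)
    (hupd : ∀ v < j, K (v + 1) = K v - η • Gbar v)
    (hd : ∀ v < j, d v ≤ min v T)
    (hsmooth : ∀ u ≤ j, ∀ v ≤ j,
      ‖gradient f (K u) - gradient f (K v)‖ ≤ μ₂ * ‖K u - K v‖)
    (hgd : ∀ v ≤ j, f (K v) - fstar ≤ ‖gradient f (K v)‖ ^ 2 / (2 * μ₁))
    (hgap : ∀ v ≤ j, ε < f (K v) - fstar)
    (hGhat : ∀ v < j, ‖Ghat v‖ ≤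
      Cg * ⨆ u : Fin (d v + 1), ‖gradient f (K (v - (u : ℕ)))‖)
    (hclose : ∀ v < j,
      ‖Gbar v - Ghat v‖ ≤ min (1 / 8) Cg * Real.sqrt (2 * μ₁ * ε))
    -- additionally, data at step j:
    (dj : ℕ) (hdj : dj ≤ min j T)
    (Gbarj Ghatj N₁ N₂ N₃ : EuclideanSpace ℝ (Fin m × Fin n))
    (hdecomp : Ghatj = N₁ + N₂ + N₃)
    (hN₁ : |⟪N₁, gradient f (K j)⟫| ≤
      (1 / 8) * ‖gradient f (K j)‖ *
        ⨆ v : Fin (dj + 1), ‖gradient f (K (j - (v : ℕ)))‖)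
    (hN₂ : |⟪N₂, gradient f (K j)⟫| ≤
      2 * ‖gradient f (K j)‖ *
        ⨆ v : Fin (dj + 1), ‖gradient f (K (j - (v : ℕ))) - gradient f (K j)‖)
    (hN₃ : (1 / 2) * ‖gradient f (K j)‖ ^ 2 ≤ ⟪N₃, gradient f (K j)⟫)
    (hGhatj : ‖Ghatj‖ ≤
      Cg * ⨆ v : Fin (dj + 1), ‖gradient f (K (j - (v : ℕ)))‖)
    (hclosej : ‖Gbarj - Ghatj‖ ≤ min (1 / 8) Cg * Real.sqrt (2 * μ₁ * ε)) :
    ((1 / 16) * ‖gradient f (K j)‖ ^ 2 ≤ ⟪gradient f (K j), Gbarj⟫ ∧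
      0 < (1 / 16) * ‖gradient f (K j)‖ ^ 2) ∧
    ‖Gbarj‖ ≤ 4 * Cg * ‖gradient f (K j)‖ := by
  -- abbreviation
  have hT1 : (1 : ℝ) ≤ (T : ℝ) := by exact_mod_cast hT
  -- positivity and sqrt bound for gradients
  have hgpos : ∀ v ≤ j, Real.sqrt (2 * μ₁ * ε) ≤ ‖gradient f (K v)‖ ∧
      0 < ‖gradient f (K v)‖ := by
    intro v hv
    have h1 : ε < ‖gradient f (K v)‖ ^ 2 / (2 * μ₁) :=
      lt_of_lt_of_le (hgap v hv) (hgd v hv)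
    have h2 : 2 * μ₁ * ε < ‖gradient f (K v)‖ ^ 2 := by
      rw [lt_div_iff₀ (by positivity)] at h1; nlinarith
    have h3 : 0 < ‖gradient f (K v)‖ := by
      nlinarith [norm_nonneg (gradient f (K v))]
    exact ⟨le_of_lt ((Real.sqrt_lt' h3).mpr h2), h3⟩
  -- stepsize bounds
  have hden : (0 : ℝ) < 128 * μ₂ * (Cg ^ 2 + (T : ℝ) * Cg) := by positivity
  have hmul : η * (128 * μ₂ * (Cg ^ 2 + (T : ℝ) * Cg)) ≤ 1 := by
    rw [← le_div_iff₀ hden] at *; exact hηle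
  have heT : μ₂ * η * Cg * (T : ℝ) ≤ 1 / 128 := by nlinarith
  have he1 : μ₂ * η * Cg ≤ 1 / 128 := by nlinarith
  have hepos : 0 < μ₂ * η * Cg := by positivity
  -- generic bound on ‖Gbar w‖ given the window comparison at w
  have Bgen : ∀ w, w < j →
      (∀ u ≤ min w T, 125 * ‖gradient f (K (w - u))‖ ≤ 128 * ‖gradient f (K w)‖) →
      ‖Gbar w‖ ≤ 3 * Cg * ‖gradient f (K w)‖ := by
    intro w hwj hwin
    have hsup : (⨆ u : Fin (d w + 1), ‖gradient f (K (w - (u : ℕ)))‖) ≤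
        128 / 125 * ‖gradient f (K w)‖ := by
      apply ciSup_le
      intro u
      have hu : (u : ℕ) ≤ min w T :=
        le_trans (Nat.lt_succ_iff.mp u.isLt) (hd w hwj)
      have := hwin u hu
      linarith
    have h1 : ‖Gbar w‖ ≤ ‖Ghat w‖ + ‖Gbar w - Ghat w‖ := by
      calc ‖Gbar w‖ = ‖Ghat w + (Gbar w - Ghat w)‖ := by congr 1; abel
        _ ≤ ‖Ghat w‖ + ‖Gbar w - Ghat w‖ := norm_add_le _ _
    have h2 : ‖Ghat w‖ ≤ Cg * (128 / 125 * ‖gradient f (K w)‖) :=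
      le_trans (hGhat w hwj) (mul_le_mul_of_nonneg_left hsup hCg.le)
    have h3 : ‖Gbar w - Ghat w‖ ≤ Cg * ‖gradient f (K w)‖ := by
      refine le_trans (hclose w hwj) ?_
      exact mul_le_mul (min_le_right _ _) (hgpos w hwj.le).1 (Real.sqrt_nonneg _) hCg.le
    have hg0 : 0 ≤ ‖gradient f (K w)‖ := norm_nonneg _
    have hXY : 0 ≤ Cg * ‖gradient f (K w)‖ := mul_nonneg hCg.le hg0
    linarith
  -- main window comparison, by strong induction
  have H : ∀ v, v ≤ j → ∀ u, u ≤ min v T →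
      125 * ‖gradient f (K (v - u))‖ ≤ 128 * ‖gradient f (K v)‖ := by
    intro v
    induction v using Nat.strong_induction_on with
    | _ v ih =>
      intro hvj u hu
      have B : ∀ w, w < v → ‖Gbar w‖ ≤ 3 * Cg * ‖gradient f (K w)‖ := by
        intro w hw
        exact Bgen w (lt_of_lt_of_le hw hvj) (ih w hw (le_of_lt (lt_of_lt_of_le hw hvj)))
      have hepow : (0 : ℝ) ≤ 1 - 3 * (μ₂ * η * Cg) := by nlinarith
      have C : ∀ u', u' ≤ min v T →
          (1 - 3 * (μ₂ * η * Cg)) ^ u' * ‖gradient f (K (v - u'))‖ ≤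
            ‖gradient f (K v)‖ := by
        intro u'
        induction u' with
        | zero => intro _; simp
        | succ k ihk =>
          intro hk
          have hk' : k ≤ min v T := le_trans (Nat.le_succ k) hk
          have h1 := ihk hk'
          have hkv : k + 1 ≤ v := le_trans hk (min_le_left _ _)
          have hw : v - (k + 1) < v := by omega
          have hwj : v - (k + 1) < j := lt_of_lt_of_le hw hvj
          have hidx : v - (k + 1) + 1 = v - k := by omega
          have h3 : K (v - k) = K (v - (k + 1)) - η • Gbar (v - (k + 1)) := by
            rw [← hidx]; exact hupd _ hwj
          have hKd : ‖K (v - (k + 1)) - K (v - k)‖ = η * ‖Gbar (v - (k + 1))‖ := by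
            rw [h3]
            have : K (v - (k + 1)) - (K (v - (k + 1)) - η • Gbar (v - (k + 1))) =
                η • Gbar (v - (k + 1)) := by abel
            rw [this, norm_smul, Real.norm_eq_abs, abs_of_pos hη]
          have hstep : ‖gradient f (K (v - (k + 1))) - gradient f (K (v - k))‖ ≤
              3 * (μ₂ * η * Cg) * ‖gradient f (K (v - (k + 1)))‖ := by
            have h2 := hsmooth (v - (k + 1)) (by omega) (v - k) (by omega)
            have h4 := B (v - (k + 1)) hw
            rw [hKd] at h2
            have hg0 : 0 ≤ ‖gradient f (K (v - (k + 1)))‖ := norm_nonneg _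
            nlinarith
          have h4 : ‖gradient f (K (v - (k + 1)))‖ - ‖gradient f (K (v - k))‖ ≤
              3 * (μ₂ * η * Cg) * ‖gradient f (K (v - (k + 1)))‖ :=
            le_trans (norm_sub_norm_le _ _) hstep
          have hpow : (0 : ℝ) ≤ (1 - 3 * (μ₂ * η * Cg)) ^ k := pow_nonneg hepow k
          calc (1 - 3 * (μ₂ * η * Cg)) ^ (k + 1) * ‖gradient f (K (v - (k + 1)))‖
              = (1 - 3 * (μ₂ * η * Cg)) ^ k *
                ((1 - 3 * (μ₂ * η * Cg)) * ‖gradient f (K (v - (k + 1)))‖) := by ring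
            _ ≤ (1 - 3 * (μ₂ * η * Cg)) ^ k * ‖gradient f (K (v - k))‖ := by
                apply mul_le_mul_of_nonneg_left _ hpow; linarith
            _ ≤ ‖gradient f (K v)‖ := h1
      have hC := C u hu
      have hBer : (1 : ℝ) - 3 * (μ₂ * η * Cg) * u ≤ (1 - 3 * (μ₂ * η * Cg)) ^ u := by
        have h := one_add_mul_le_pow (a := -(3 * (μ₂ * η * Cg))) (by nlinarith) u
        have he : (1 : ℝ) + -(3 * (μ₂ * η * Cg)) = 1 - 3 * (μ₂ * η * Cg) := by ring
        rw [he] at h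
        nlinarith [h]
      have huT : (u : ℝ) ≤ (T : ℝ) := by
        exact_mod_cast le_trans hu (min_le_right v T)
      have hu0 : (0 : ℝ) ≤ (u : ℝ) := Nat.cast_nonneg u
      have hfrac : (125 / 128 : ℝ) ≤ (1 - 3 * (μ₂ * η * Cg)) ^ u := by nlinarith
      have hg0 : 0 ≤ ‖gradient f (K (v - u))‖ := norm_nonneg _
      nlinarith [mul_le_mul_of_nonneg_right hfrac hg0]
  -- consequences at step j
  have hsupj : (⨆ v : Fin (dj + 1), ‖gradient f (K (j - (v : ℕ)))‖) ≤
      128 / 125 * ‖gradient f (K j)‖ := by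
    apply ciSup_le
    intro v
    have hv : (v : ℕ) ≤ min j T := le_trans (Nat.lt_succ_iff.mp v.isLt) hdj
    have := H j le_rfl v hv
    linarith
  have B : ∀ w, w < j → ‖Gbar w‖ ≤ 3 * Cg * ‖gradient f (K w)‖ := by
    intro w hw
    exact Bgen w hw (H w hw.le)
  have hgj0 : 0 < ‖gradient f (K j)‖ := (hgpos j le_rfl).2
  -- distance bound
  have Hd : ∀ u, u ≤ dj → ‖K (j - u) - K j‖ ≤
      (u : ℝ) * (η * (3 * Cg * (128 / 125 * ‖gradient f (K j)‖))) := by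
    intro u
    induction u with
    | zero => intro _; simp
    | succ k ihk =>
      intro hk
      have hk' : k ≤ dj := le_trans (Nat.le_succ k) hk
      have h1 := ihk hk'
      have hkj : k + 1 ≤ j := le_trans hk (le_trans hdj (min_le_left _ _))
      have hw : j - (k + 1) < j := by omega
      have hidx : j - (k + 1) + 1 = j - k := by omega
      have h3 : K (j - k) = K (j - (k + 1)) - η • Gbar (j - (k + 1)) := by
        rw [← hidx]; exact hupd _ hw
      have hKd : ‖K (j - (k + 1)) - K (j - k)‖ = η * ‖Gbar (j - (k + 1))‖ := by
        rw [h3]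
        have : K (j - (k + 1)) - (K (j - (k + 1)) - η • Gbar (j - (k + 1))) =
            η • Gbar (j - (k + 1)) := by abel
        rw [this, norm_smul, Real.norm_eq_abs, abs_of_pos hη]
      have hBw := B (j - (k + 1)) hw
      have hHw : 125 * ‖gradient f (K (j - (k + 1)))‖ ≤ 128 * ‖gradient f (K j)‖ :=
        H j le_rfl (k + 1) (le_trans hk hdj)
      have htri : ‖K (j - (k + 1)) - K j‖ ≤
          ‖K (j - (k + 1)) - K (j - k)‖ + ‖K (j - k) - K j‖ := by
        have := norm_add_le (K (j - (k + 1)) - K (j - k)) (K (j - k) - K j)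
        have he : K (j - (k + 1)) - K (j - k) + (K (j - k) - K j) =
            K (j - (k + 1)) - K j := by abel
        rwa [he] at this
      rw [hKd] at htri
      have hcast : ((k + 1 : ℕ) : ℝ) = (k : ℝ) + 1 := by push_cast; ring
      rw [hcast]
      have hg' : ‖gradient f (K (j - (k + 1)))‖ ≤ 128 / 125 * ‖gradient f (K j)‖ := by
        linarith
      have e2 : η * ‖Gbar (j - (k + 1))‖ ≤
          η * (3 * Cg * (128 / 125 * ‖gradient f (K j)‖)) := by
        apply mul_le_mul_of_nonneg_left _ hη.le
        refine le_trans hBw ?_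
        exact mul_le_mul_of_nonneg_left hg' (by positivity)
      linarith
  -- sup of gradient differences
  have hDsup : (⨆ v : Fin (dj + 1),
      ‖gradient f (K (j - (v : ℕ))) - gradient f (K j)‖) ≤
      3 / 125 * ‖gradient f (K j)‖ := by
    apply ciSup_le
    intro v
    have hv : (v : ℕ) ≤ dj := Nat.lt_succ_iff.mp v.isLt
    have h1 := hsmooth (j - (v : ℕ)) (by omega) j le_rfl
    have h2 := Hd (v : ℕ) hv
    have hvT : ((v : ℕ) : ℝ) ≤ (T : ℝ) := by
      exact_mod_cast le_trans hv (le_trans hdj (min_le_right _ _))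
    calc ‖gradient f (K (j - (v : ℕ))) - gradient f (K j)‖ ≤
        μ₂ * ‖K (j - (v : ℕ)) - K j‖ := h1
      _ ≤ μ₂ * ((T : ℝ) * (η * (3 * Cg * (128 / 125 * ‖gradient f (K j)‖)))) := by
          apply mul_le_mul_of_nonneg_left _ hμ₂.le
          refine le_trans h2 ?_
          apply mul_le_mul_of_nonneg_right hvT
          positivity
      _ ≤ 3 / 125 * ‖gradient f (K j)‖ := by nlinarith
  -- final bounds
  have hsq : Real.sqrt (2 * μ₁ * ε) ≤ ‖gradient f (K j)‖ := (hgpos j le_rfl).1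
  have hclosej' : ‖Gbarj - Ghatj‖ ≤ 1 / 8 * ‖gradient f (K j)‖ := by
    refine le_trans hclosej ?_
    refine mul_le_mul (min_le_left _ _) hsq (Real.sqrt_nonneg _) (by norm_num)
  have hsplit : ⟪gradient f (K j), Gbarj⟫ =
      ⟪N₁, gradient f (K j)⟫ + ⟪N₂, gradient f (K j)⟫ +
      ⟪N₃, gradient f (K j)⟫ + ⟪Gbarj - Ghatj, gradient f (K j)⟫ := by
    have hG : Gbarj = N₁ + N₂ + N₃ + (Gbarj - Ghatj) := by
      rw [← hdecomp]; abel
    calc ⟪gradient f (K j), Gbarj⟫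
        = ⟪gradient f (K j), N₁ + N₂ + N₃ + (Gbarj - Ghatj)⟫ := by rw [← hG]
      _ = _ := by
          simp only [inner_add_right]
          rw [real_inner_comm (gradient f (K j)) N₁,
            real_inner_comm (gradient f (K j)) N₂,
            real_inner_comm (gradient f (K j)) N₃,
            real_inner_comm (gradient f (K j)) (Gbarj - Ghatj)]
  have hb1 : |⟪N₁, gradient f (K j)⟫| ≤
      (1 / 8) * ‖gradient f (K j)‖ * (128 / 125 * ‖gradient f (K j)‖) := by
    refine le_trans hN₁ ?_
    apply mul_le_mul_of_nonneg_left hsupj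
    positivity
  have hb2 : |⟪N₂, gradient f (K j)⟫| ≤
      2 * ‖gradient f (K j)‖ * (3 / 125 * ‖gradient f (K j)‖) := by
    refine le_trans hN₂ ?_
    apply mul_le_mul_of_nonneg_left hDsup
    positivity
  have hb4 : |⟪Gbarj - Ghatj, gradient f (K j)⟫| ≤
      1 / 8 * ‖gradient f (K j)‖ * ‖gradient f (K j)‖ := by
    refine le_trans (abs_real_inner_le_norm _ _) ?_
    apply mul_le_mul_of_nonneg_right hclosej' (norm_nonneg _)
  have hb1' := abs_le.mp hb1
  have hb2' := abs_le.mp hb2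
  have hb4' := abs_le.mp hb4
  constructor
  · constructor
    · rw [hsplit]
      have hsq' : ‖gradient f (K j)‖ * ‖gradient f (K j)‖ = ‖gradient f (K j)‖ ^ 2 := by
        ring
      nlinarith [sq_nonneg ‖gradient f (K j)‖]
    · positivity
  · have h1 : ‖Gbarj‖ ≤ ‖Ghatj‖ + ‖Gbarj - Ghatj‖ := by
      calc ‖Gbarj‖ = ‖Ghatj + (Gbarj - Ghatj)‖ := by congr 1; abel
        _ ≤ ‖Ghatj‖ + ‖Gbarj - Ghatj‖ := norm_add_le _ _
    have h2 : ‖Ghatj‖ ≤ Cg * (128 / 125 * ‖gradient f (K j)‖) :=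
      le_trans hGhatj (mul_le_mul_of_nonneg_left hsupj hCg.le)
    have h3 : ‖Gbarj - Ghatj‖ ≤ Cg * ‖gradient f (K j)‖ :=
      le_trans hclosej (mul_le_mul (min_le_right _ _) hsq (Real.sqrt_nonneg _) hCg.le)
    have h4 : 0 ≤ Cg * ‖gradient f (K j)‖ := mul_nonneg hCg.le (norm_nonneg _)
    linarith
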